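/- Fix integers n > 3k ≥ 3 and θ as above, with T(v)_j = v_{j+1} (j<n), T(v)_n = θ v_1. For a prime p not dividing θ and p > n, the number of vectors b ∈ 𝔽_p^n such that the k vectors T^0(b),...,T^{k−1}(b) are linearly dependent over 𝔽_p (equivalently, all k×k minors of the k×n matrix they form vanish) is O(p^{k−1}), with implied constant depending only on n, k, θ. -/

import Mathlib

/-- The shift-with-`θ` linear map on `(ZMod p)^n`. -/
def TmapF (n p : ℕ) (θ : ℤ) (v : Fin n → ZMod p) : Fin n → ZMod p :=
  fun j => if h : (j : ℕ) + 1 < n then v ⟨(j : ℕ) + 1, h⟩ else (θ : ZMod p) * v ⟨0, j.pos⟩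

open Polynomial UniqueFactorizationMonoid

/-- extension of a vector to `ℕ` by zero. -/
def extv (n p : ℕ) (w : Fin n → ZMod p) (m : ℕ) : ZMod p :=
  if h : m < n then w ⟨m, h⟩ else 0

lemma extv_of_lt {n p : ℕ} (w : Fin n → ZMod p) {m : ℕ} (h : m < n) :
    extv n p w m = w ⟨m, h⟩ := dif_pos h

section Aux

variable {n p : ℕ} {θ : ℤ}

/-- `TmapF` as a linear map. -/
def Tlin (n p : ℕ) (θ : ℤ) : (Fin n → ZMod p) →ₗ[ZMod p] (Fin n → ZMod p) where
  toFun := TmapF n p θ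
  map_add' v w := by
    funext j
    simp only [TmapF, Pi.add_apply]
    split <;> ring
  map_smul' c v := by
    funext j
    simp only [TmapF, Pi.smul_apply, RingHom.id_apply, smul_eq_mul]
    split <;> ring

lemma Tlin_coe : ⇑(Tlin n p θ) = TmapF n p θ := rfl

lemma iter_apply (v : Fin n → ZMod p) :
    ∀ (i : ℕ) (hi : i ≤ n) (j : Fin n),
      (TmapF n p θ)^[i] v j =
        if h : (j : ℕ) + i < n then v ⟨(j : ℕ) + i, h⟩
        else (θ : ZMod p) * v ⟨(j : ℕ) + i - n, by have := j.isLt; omega⟩ := by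
  intro i
  induction i with
  | zero =>
    intro _ j
    rw [Function.iterate_zero_apply, dif_pos (by simpa using j.isLt)]
    congr 1
  | succ i IH =>
    intro hi j
    have hi' : i ≤ n := Nat.le_of_succ_le hi
    rw [Function.iterate_succ_apply']
    show (if h : (j : ℕ) + 1 < n then (TmapF n p θ)^[i] v ⟨(j : ℕ) + 1, h⟩
        else (θ : ZMod p) * (TmapF n p θ)^[i] v ⟨0, j.pos⟩) = _
    by_cases h1 : (j : ℕ) + 1 < n
    · rw [dif_pos h1, IH hi' ⟨(j : ℕ) + 1, h1⟩]
      by_cases h2 : (j : ℕ) + (i + 1) < n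
      · rw [dif_pos (show (j : ℕ) + 1 + i < n by omega), dif_pos h2]
        congr 1
        exact Fin.ext (by simp only [Fin.val_mk]; omega)
      · rw [dif_neg (show ¬((j : ℕ) + 1 + i < n) by omega), dif_neg h2]
        congr 2
        exact Fin.ext (by simp only [Fin.val_mk]; omega)
    · have hj : (j : ℕ) = n - 1 := by have := j.isLt; omega
      rw [dif_neg h1, IH hi' ⟨0, j.pos⟩,
        dif_pos (show (0 : ℕ) + i < n by omega),
        dif_neg (show ¬((j : ℕ) + (i + 1) < n) by omega)]
      congr 2
      exact Fin.ext (by simp only [Fin.val_mk]; omega)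

lemma Tpow_n_apply (v : Fin n → ZMod p) : ((Tlin n p θ) ^ n) v = (θ : ZMod p) • v := by
  funext j
  rw [Module.End.pow_apply, Tlin_coe, iter_apply v n le_rfl j,
    dif_neg (show ¬((j : ℕ) + n < n) by have := j.isLt; omega)]
  simp only [Pi.smul_apply, smul_eq_mul]
  congr 2
  exact Fin.ext (by simp only [Fin.val_mk]; omega)

lemma aeval_M_apply (b : Fin n → ZMod p) :
    (aeval (Tlin n p θ)) ((X : Polynomial (ZMod p)) ^ n - C ((θ : ℤ) : ZMod p)) b = 0 := by
  rw [map_sub, aeval_X_pow, aeval_C]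
  simp only [LinearMap.sub_apply, Module.algebraMap_end_apply, Tpow_n_apply, sub_self]

/-- a vector annihilated by a monic polynomial in `T` of degree `≤ k-1` is determined by its
first `k-1` coordinates. -/
lemma determined {k : ℕ} (hkn : k - 1 < n)
    (Q : Polynomial (ZMod p)) (hQm : Q.Monic) (hQd : Q.natDegree ≤ k - 1)
    {b b' : Fin n → ZMod p}
    (hb : (aeval (Tlin n p θ)) Q b = 0) (hb' : (aeval (Tlin n p θ)) Q b' = 0)
    (hag : ∀ j : Fin n, (j : ℕ) < k - 1 → b j = b' j) : b = b' := by
  set d := Q.natDegree with hd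
  have key : ∀ (w : Fin n → ZMod p), (aeval (Tlin n p θ)) Q w = 0 →
      ∀ j : ℕ, j + d < n →
      ∑ i ∈ Finset.range (d + 1), Q.coeff i * extv n p w (j + i) = 0 := by
    intro w hw j hj
    have hjn : j < n := by omega
    have h1 : (aeval (Tlin n p θ)) Q w ⟨j, hjn⟩ = 0 := by rw [hw]; rfl
    rw [aeval_eq_sum_range, LinearMap.sum_apply, Finset.sum_apply] at h1
    rw [← h1]
    refine Finset.sum_congr rfl ?_
    intro i hi
    have hik : i ≤ d := by
      have := Finset.mem_range.mp hi
      omega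
    have hlt : j + i < n := by omega
    rw [LinearMap.smul_apply, Pi.smul_apply, smul_eq_mul, Module.End.pow_apply, Tlin_coe,
      iter_apply w i (by omega) ⟨j, hjn⟩,
      dif_pos (show ((⟨j, hjn⟩ : Fin n) : ℕ) + i < n from hlt),
      extv_of_lt w hlt]
  have main : ∀ m, ∀ _ : m < n, extv n p b m = extv n p b' m := by
    intro m
    induction m using Nat.strong_induction_on with
    | _ m IH =>
      intro hm
      by_cases hmk : m < k - 1
      · rw [extv_of_lt b hm, extv_of_lt b' hm]
        exact hag ⟨m, hm⟩ hmk
      · have hdm : d ≤ m := le_trans hQd (not_lt.mp hmk)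
        have hjm : (m - d) + d = m := by omega
        have Eb := key b hb (m - d) (by omega)
        have Eb' := key b' hb' (m - d) (by omega)
        rw [Finset.sum_range_succ] at Eb Eb'
        have hcd : Q.coeff d = 1 := hQm.coeff_natDegree
        rw [hcd, one_mul] at Eb Eb'
        have hsum : (∑ i ∈ Finset.range d, Q.coeff i * extv n p b ((m - d) + i)) =
            ∑ i ∈ Finset.range d, Q.coeff i * extv n p b' ((m - d) + i) := by
          refine Finset.sum_congr rfl ?_
          intro i hi
          have hid : i < d := Finset.mem_range.mp hi
          rw [IH ((m - d) + i) (by omega) (by omega)]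
        rw [← hjm]
        linear_combination Eb - Eb' - hsum
  funext j
  have := main (j : ℕ) j.isLt
  rw [extv_of_lt b j.isLt, extv_of_lt b' j.isLt] at this
  exact this

/-- every "degenerate" vector is killed by a monic divisor of `X^n - θ` of degree `≤ k-1`. -/
lemma exists_divisor [Fact p.Prime] {k : ℕ} (hn : 0 < n) {b : Fin n → ZMod p}
    (hdep : ¬ LinearIndependent (ZMod p) (fun i : Fin k => (TmapF n p θ)^[(i : ℕ)] b)) :
    ∃ Q : Polynomial (ZMod p), Q.Monic ∧
      Q ∣ ((X : Polynomial (ZMod p)) ^ n - C ((θ : ℤ) : ZMod p)) ∧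
      Q.natDegree ≤ k - 1 ∧ (aeval (Tlin n p θ)) Q b = 0 := by
  classical
  obtain ⟨g, hsum, i0, hi0⟩ := Fintype.not_linearIndependent_iff.mp hdep
  set P : Polynomial (ZMod p) := ∑ i : Fin k, C (g i) * X ^ (i : ℕ) with hP
  have hcoeff : ∀ i : Fin k, P.coeff (i : ℕ) = g i := by
    intro i
    rw [hP, finset_sum_coeff, Finset.sum_eq_single i]
    · simp
    · intro j _ hji
      rw [coeff_C_mul, coeff_X_pow, if_neg (by
        intro h
        exact hji (Fin.ext (by omega)))]
      ring
    · simp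
  have hP0 : P ≠ 0 := by
    intro h
    apply hi0
    rw [← hcoeff i0, h, coeff_zero]
  have hPd : P.natDegree ≤ k - 1 := by
    refine le_trans (natDegree_sum_le _ _) ?_
    rw [Finset.fold_max_le]
    refine ⟨by omega, ?_⟩
    intro i _
    refine le_trans (natDegree_C_mul_le _ _) ?_
    rw [natDegree_X_pow]
    have := i.isLt
    omega
  have hPb : (aeval (Tlin n p θ)) P b = 0 := by
    rw [hP, map_sum, LinearMap.sum_apply, ← hsum]
    refine Finset.sum_congr rfl ?_
    intro i _
    rw [map_mul, aeval_C, aeval_X_pow, Module.End.mul_apply, Module.End.pow_apply, Tlin_coe,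
      Module.algebraMap_end_apply]
  set M : Polynomial (ZMod p) := (X : Polynomial (ZMod p)) ^ n - C ((θ : ℤ) : ZMod p) with hM
  have hMdeg : M.natDegree = n := natDegree_X_pow_sub_C
  have hM0 : M ≠ 0 := by
    intro h
    rw [h, natDegree_zero] at hMdeg
    omega
  set Q0 : Polynomial (ZMod p) := EuclideanDomain.gcd P M with hQ0
  have hQ00 : Q0 ≠ 0 := fun h => hP0 (EuclideanDomain.gcd_eq_zero_iff.mp h).1
  have hQ0b : (aeval (Tlin n p θ)) Q0 b = 0 := by
    have hgcd := EuclideanDomain.gcd_eq_gcd_ab P M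
    rw [hQ0, hgcd, mul_comm P _, mul_comm M _, map_add, map_mul, map_mul, LinearMap.add_apply,
      Module.End.mul_apply, Module.End.mul_apply, hPb, aeval_M_apply, map_zero, map_zero, add_zero]
  refine ⟨normalize Q0, monic_normalize hQ00, ?_, ?_, ?_⟩
  · exact normalize_dvd_iff.mpr (EuclideanDomain.gcd_dvd_right _ _)
  · have h1 : (normalize Q0).natDegree = Q0.natDegree :=
      natDegree_eq_of_degree_eq (degree_normalize (p := Q0))
    rw [h1]
    exact le_trans (natDegree_le_of_dvd (EuclideanDomain.gcd_dvd_left _ _) hP0) hPd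
  · obtain ⟨u, hu⟩ : Q0 ∣ normalize Q0 := dvd_normalize_iff.mpr dvd_rfl
    rw [hu, mul_comm, map_mul, Module.End.mul_apply, hQ0b, map_zero]

end Aux

/-- **Degenerate vectors mod `p` are rare.**  Fix `n > 3k ≥ 3` and `θ ≠ 0` with `x^n - θ`
irreducible over ℚ.  There is a constant `C = C(n,k,θ)` such that for every prime `p` with
`p ∤ θ` and `p > n`, the number of `b ∈ 𝔽_p^n` for which `T^0 b, …, T^{k-1} b` are linearly
dependent over `𝔽_p` is at most `C · p^{k-1}`. -/
theorem stmt_4 (n k : ℕ) (hk : 1 ≤ k) (hnk : 3 * k < n) (θ : ℤ) (hθ : θ ≠ 0)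
    (hirr : Irreducible ((Polynomial.X : Polynomial ℚ) ^ n - Polynomial.C (θ : ℚ))) :
    ∃ C : ℝ, 0 < C ∧ ∀ p : ℕ, p.Prime → ¬ ((p : ℤ) ∣ θ) → n < p →
      (Nat.card {b : Fin n → ZMod p | ¬ LinearIndependent (ZMod p)
          (fun i : Fin k => (TmapF n p θ)^[(i : ℕ)] b)} : ℝ)
        ≤ C * (p : ℝ) ^ (k - 1) := by
  classical
  refine ⟨(2 : ℝ) ^ n, by positivity, ?_⟩
  intro p hp hpθ hnp
  haveI : Fact p.Prime := ⟨hp⟩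
  have hn : 0 < n := by omega
  set M : Polynomial (ZMod p) := (X : Polynomial (ZMod p)) ^ n - C ((θ : ℤ) : ZMod p) with hM
  have hMdeg : M.natDegree = n := natDegree_X_pow_sub_C
  have hM0 : M ≠ 0 := by
    intro h
    rw [h, natDegree_zero] at hMdeg
    omega
  -- the subtype of monic divisors of M
  set D := {Q : Polynomial (ZMod p) // Q.Monic ∧ Q ∣ M} with hD
  -- injection of D into sub-multisets of factors of M
  have hψinj : Function.Injective (fun Q : D => normalizedFactors Q.1) := by
    intro Q1 Q2 h
    have h1 : Q1.1 ≠ 0 := Q1.2.1.ne_zero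
    have h2 : Q2.1 ≠ 0 := Q2.2.1.ne_zero
    have a1 : Associated (normalizedFactors Q1.1).prod Q1.1 := prod_normalizedFactors h1
    have a2 : Associated (normalizedFactors Q2.1).prod Q2.1 := prod_normalizedFactors h2
    have h' : normalizedFactors Q1.1 = normalizedFactors Q2.1 := h
    have : Associated Q1.1 Q2.1 := a1.symm.trans (by rw [h']; exact a2)
    exact Subtype.ext (eq_of_monic_of_associated Q1.2.1 Q2.2.1 this)
  have hψmem : ∀ Q : D, normalizedFactors Q.1 ∈ (normalizedFactors M).powerset.toFinset := by
    intro Q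
    rw [Multiset.mem_toFinset, Multiset.mem_powerset]
    exact (dvd_iff_normalizedFactors_le_normalizedFactors Q.2.1.ne_zero hM0).mp Q.2.2
  have hinj2 : Function.Injective (fun Q : D =>
      (⟨normalizedFactors Q.1, hψmem Q⟩ : ((normalizedFactors M).powerset.toFinset : Finset _))) :=
    fun a b h => hψinj (congrArg Subtype.val h)
  have hDfin : Finite D := Finite.of_injective _ hinj2
  have hDcard : Nat.card D ≤ 2 ^ n := by
    have h1 : Nat.card D ≤ (normalizedFactors M).powerset.toFinset.card := by
      calc Nat.card D ≤ Nat.card ((normalizedFactors M).powerset.toFinset : Finset _) :=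
            Nat.card_le_card_of_injective _ hinj2
        _ = (normalizedFactors M).powerset.toFinset.card := Nat.card_eq_finsetCard _
    have h2 : (normalizedFactors M).powerset.toFinset.card
        ≤ Multiset.card (normalizedFactors M).powerset := Multiset.toFinset_card_le _
    have h3 : Multiset.card (normalizedFactors M).powerset
        = 2 ^ Multiset.card (normalizedFactors M) := Multiset.card_powerset _
    have h4 : Multiset.card (normalizedFactors M) ≤ n := by
      have hMm : M.Monic := monic_X_pow_sub_C _ (by omega)
      have hfacmonic : ∀ q ∈ normalizedFactors M, Monic q := by
        intro q hq
        have hq0 : q ≠ 0 := (prime_of_normalized_factor q hq).ne_zero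
        have := monic_normalize (p := q) hq0
        rwa [normalize_normalized_factor q hq] at this
      have hprodmonic : ((normalizedFactors M).map id).prod.Monic :=
        monic_multiset_prod_of_monic _ id (fun q hq => hfacmonic q hq)
      rw [Multiset.map_id] at hprodmonic
      have hprod : (normalizedFactors M).prod = M :=
        eq_of_monic_of_associated hprodmonic hMm (prod_normalizedFactors hM0)
      have h0m : (0 : Polynomial (ZMod p)) ∉ normalizedFactors M := by
        intro h
        exact (prime_of_normalized_factor 0 h).ne_zero rfl
      have hdeg : ((normalizedFactors M).map natDegree).sum = n := by
        rw [← natDegree_multiset_prod _ h0m, hprod, hMdeg]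
      have hone : ∀ x ∈ (normalizedFactors M).map natDegree, 1 ≤ x := by
        intro x hx
        obtain ⟨q, hq, rfl⟩ := Multiset.mem_map.mp hx
        exact (irreducible_of_normalized_factor q hq).natDegree_pos
      have h5 := Multiset.card_nsmul_le_sum hone
      rw [hdeg, Multiset.card_map, smul_eq_mul, mul_one] at h5
      exact h5
    calc Nat.card D ≤ 2 ^ Multiset.card (normalizedFactors M) := by omega
      _ ≤ 2 ^ n := Nat.pow_le_pow_right (by norm_num) h4
  -- the bad set
  set S := {b : Fin n → ZMod p | ¬ LinearIndependent (ZMod p)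
      (fun i : Fin k => (TmapF n p θ)^[(i : ℕ)] b)} with hS
  have hkn : k - 1 < n := by omega
  choose Qf hQf1 hQf2 hQf3 hQf4 using
    (fun b : S => exists_divisor (θ := θ) hn (k := k) b.2)
  haveI : Finite (D × (Fin (k - 1) → ZMod p)) := by
    have := hDfin
    exact Finite.instProd
  have hcard : Nat.card S ≤ Nat.card D * p ^ (k - 1) := by
    have hinj : Function.Injective (fun b : S =>
        ((⟨Qf b, hQf1 b, hQf2 b⟩ : D),
          (fun j : Fin (k - 1) => b.1 ⟨(j : ℕ), lt_trans j.isLt hkn⟩))) := by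
      intro b b' h
      have hQ : Qf b = Qf b' := congrArg Subtype.val (congrArg Prod.fst h)
      have hcoord := congrArg Prod.snd h
      have hag : ∀ j : Fin n, (j : ℕ) < k - 1 → b.1 j = b'.1 j := by
        intro j hj
        have := congrFun hcoord ⟨(j : ℕ), hj⟩
        simpa using this
      refine Subtype.ext ?_
      refine determined hkn (Qf b) (hQf1 b) (hQf3 b) (hQf4 b) ?_ hag
      rw [hQ]
      exact hQf4 b'
    calc Nat.card S ≤ Nat.card (D × (Fin (k - 1) → ZMod p)) :=
          Nat.card_le_card_of_injective _ hinj
      _ = Nat.card D * p ^ (k - 1) := by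
          rw [Nat.card_prod, Nat.card_fun, Nat.card_zmod]
          congr 2
          simp
  have hfinal : Nat.card S ≤ 2 ^ n * p ^ (k - 1) :=
    le_trans hcard (Nat.mul_le_mul_right _ hDcard)
  calc (Nat.card S : ℝ) ≤ ((2 ^ n * p ^ (k - 1) : ℕ) : ℝ) := by exact_mod_cast hfinal
    _ = (2 : ℝ) ^ n * (p : ℝ) ^ (k - 1) := by push_cast; ring
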